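/- arXiv:2006.02832 — 5 statements merged into one kernel-verified Lean document; each statement's English description precedes it below -/
import Mathlib

section
/- Let G = ⟨a, b | aᵐ = 1, [a,b] = a^{1−r}⟩ with m > 0, gcd(r, m) = 1, and let t = gcd(m, r−1). Write xm + y(r−1) = t for integers x, y, and fix λ ∈ ℂ× with λᵗ = 1. Then the function α : G × G → ℂ× defined by α(aⁱ bʲ, a^{i₁} b^{j₁}) = λ^{i₁ y (rʲ − 1)/t} is a well-defined 2-cocycle on G. -/
/-- A normalized `ℂˣ`-valued 2-cocycle on a group `G`. -/
def IsCocycle {G : Type*} [Group G] (α : G → G → ℂˣ) : Prop :=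
  (∀ x y z : G, α x y * α (x * y) z = α x (y * z) * α y z) ∧
  (∀ g : G, α 1 g = 1 ∧ α g 1 = 1)

/-- The infinite metacyclic group `G(m,0,r) = (ℤ/mℤ) ⋊ᵣ ℤ`, built from the
automorphism `σ : x ↦ r x` of `ℤ/mℤ`. -/
abbrev MetaG (m : ℕ) (σ : AddAut (ZMod m)) : Type :=
  SemidirectProduct (Multiplicative (ZMod m)) (Multiplicative ℤ)
    (zpowersHom (MulAut (Multiplicative (ZMod m))) (AddEquiv.toMultiplicative σ))

/-- The formula `α(aⁱbʲ, a^{i₁}b^{j₁}) = λ^{i₁ y (rʲ−1)/t}` defines a 2-cocycle on the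
infinite metacyclic group `G(m, 0, r)`. -/
theorem stmt9 (m : ℕ) (hm : 0 < m) (r : ℤ) (hcop : IsCoprime r (m : ℤ))
    (σ : AddAut (ZMod m)) (hσ : ∀ z : ZMod m, σ z = (r : ZMod m) * z)
    (t : ℕ) (ht : (t : ℤ) = Int.gcd (m : ℤ) (r - 1))
    (x y : ℤ) (hxy : x * m + y * (r - 1) = t)
    (lam : ℂˣ) (hlam : lam ^ t = 1) :
    ∃ α : MetaG m σ → MetaG m σ → ℂˣ,
      IsCocycle α ∧
      ∀ (i i₁ : ℤ) (j j₁ : ℕ),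
        α ⟨Multiplicative.ofAdd (i : ZMod m), Multiplicative.ofAdd (j : ℤ)⟩
          ⟨Multiplicative.ofAdd (i₁ : ZMod m), Multiplicative.ofAdd (j₁ : ℤ)⟩
          = lam ^ (i₁ * y * ((r ^ j - 1) / t)) := by
  haveI : NeZero m := ⟨hm.ne'⟩
  have ht0 : 0 < t := by
    rcases Nat.eq_zero_or_pos t with h | h
    · exfalso
      subst h
      simp only [Nat.cast_zero] at ht
      have h2 : Int.gcd (m : ℤ) (r - 1) = 0 := by exact_mod_cast ht.symm
      have h3 := Int.gcd_eq_zero_iff.mp h2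
      have : (m : ℤ) = 0 := h3.1
      omega
    · exact h
  haveI : NeZero t := ⟨ht0.ne'⟩
  have htm : (t : ℤ) ∣ (m : ℤ) := by rw [ht]; exact Int.gcd_dvd_left _ _
  have htr : (t : ℤ) ∣ r - 1 := by rw [ht]; exact Int.gcd_dvd_right _ _
  have htmn : t ∣ m := by exact_mod_cast htm
  obtain ⟨s, hs⟩ := htr
  obtain ⟨m', hm2⟩ := htmn
  have htmn : t ∣ m := ⟨m', hm2⟩
  have hm2' : (m : ℤ) = (t : ℤ) * (m' : ℤ) := by exact_mod_cast hm2
  have htne : (t : ℤ) ≠ 0 := by exact_mod_cast ht0.ne'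
  set q : ℤ := y * s with hq
  -- λ powers depend only on exponent mod t
  have hpow : ∀ a b : ℤ, (t : ℤ) ∣ a - b → lam ^ a = lam ^ b := by
    rintro a b ⟨k, hk⟩
    have ha : a = b + (t : ℤ) * k := by linarith
    rw [ha, zpow_add, zpow_mul, zpow_natCast, hlam, one_zpow, mul_one]
  -- r ≡ 1 mod t
  have hr1 : ((r : ℤ) : ZMod t) = 1 := by
    have h0 : ((r - 1 : ℤ) : ZMod t) = 0 :=
      (ZMod.intCast_zmod_eq_zero_iff_dvd _ t).mpr ⟨s, hs⟩
    push_cast at h0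
    linear_combination h0
  -- casting vals to ZMod t
  have hcast : ∀ z : ZMod m, ((z.val : ℤ) : ZMod t) = ZMod.castHom htmn (ZMod t) z := by
    intro z
    push_cast
    rw [ZMod.natCast_val, ZMod.castHom_apply]
  have hcastm : ∀ z : ZMod m, ((z.val : ℤ) : ZMod m) = z := by
    intro z
    push_cast
    rw [ZMod.natCast_val, ZMod.cast_id]
  set τ : MulAut (Multiplicative (ZMod m)) := AddEquiv.toMultiplicative σ with hτdef
  -- one step of σ preserves residue mod t
  have hstep : ∀ w : Multiplicative (ZMod m),
      ZMod.castHom htmn (ZMod t) (Multiplicative.toAdd (τ w)) =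
        ZMod.castHom htmn (ZMod t) (Multiplicative.toAdd w) := by
    intro w
    have h1 : Multiplicative.toAdd (τ w) = σ (Multiplicative.toAdd w) := rfl
    rw [h1, hσ, map_mul, map_intCast, hr1, one_mul]
  have hinv : ∀ w : Multiplicative (ZMod m),
      ZMod.castHom htmn (ZMod t) (Multiplicative.toAdd (τ⁻¹ w)) =
        ZMod.castHom htmn (ZMod t) (Multiplicative.toAdd w) := by
    intro w
    have := hstep (τ⁻¹ w)
    rw [MulAut.apply_inv_self] at this
    exact this.symm
  have hτn : ∀ (n : ℤ) (w : Multiplicative (ZMod m)),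
      ZMod.castHom htmn (ZMod t) (Multiplicative.toAdd ((τ ^ n) w)) =
        ZMod.castHom htmn (ZMod t) (Multiplicative.toAdd w) := by
    intro n
    induction n using Int.induction_on with
    | zero => intro w; simp
    | succ k ih =>
        intro w
        rw [zpow_add_one, MulAut.mul_apply, ih, hstep]
    | pred k ih =>
        intro w
        rw [zpow_sub_one, MulAut.mul_apply, ih, hinv]
  -- abbreviation for the integer value of the ZMod m part
  set V : Multiplicative (ZMod m) → ℤ := fun w => ((Multiplicative.toAdd w).val : ℤ) with hV
  -- mod m additivity of V
  have hL1 : ∀ u w : Multiplicative (ZMod m), (m : ℤ) ∣ V u + V w - V (u * w) := by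
    intro u w
    rw [← ZMod.intCast_zmod_eq_zero_iff_dvd]
    have h1 : Multiplicative.toAdd (u * w) = Multiplicative.toAdd u + Multiplicative.toAdd w :=
      rfl
    simp only [hV]
    rw [Int.cast_sub, Int.cast_add, hcastm, hcastm, hcastm, h1, sub_self]
  -- τ^n preserves V mod t
  have hL3 : ∀ (n : ℤ) (w : Multiplicative (ZMod m)), (t : ℤ) ∣ V w - V ((τ ^ n) w) := by
    intro n w
    rw [← ZMod.intCast_zmod_eq_zero_iff_dvd]
    simp only [hV]
    rw [Int.cast_sub, hcast, hcast, hτn, sub_self]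
  -- t ∣ q * m
  have hL2 : (t : ℤ) ∣ q * (m : ℤ) := ⟨y * s * (m' : ℤ), by rw [hm2']; ring⟩
  -- key combined divisibility
  have hqD : ∀ (u w : Multiplicative (ZMod m)) (n : ℤ),
      (t : ℤ) ∣ q * (V u + V w - V (u * (τ ^ n) w)) := by
    intro u w n
    obtain ⟨k1, e1⟩ := hL1 u ((τ ^ n) w)
    obtain ⟨k2, e2⟩ := hL3 n w
    obtain ⟨k3, e3⟩ := hL2
    refine ⟨k3 * k1 + q * k2, ?_⟩
    have hD : V u + V w - V (u * (τ ^ n) w) = (m : ℤ) * k1 + (t : ℤ) * k2 := by linarith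
    rw [hD]
    linear_combination k1 * e3
  -- the cocycle
  refine ⟨fun g h => lam ^ (q * Multiplicative.toAdd g.right * V h.left), ⟨?_, ?_⟩, ?_⟩
  · intro X Y Z
    rw [← zpow_add, ← zpow_add]
    apply hpow
    rw [SemidirectProduct.mul_right, SemidirectProduct.mul_left]
    have hφ : (zpowersHom (MulAut (Multiplicative (ZMod m)))
        (AddEquiv.toMultiplicative σ)) Y.right = τ ^ (Multiplicative.toAdd Y.right) := rfl
    rw [hφ]
    obtain ⟨K, hK⟩ := hqD Y.left Z.left (Multiplicative.toAdd Y.right)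
    refine ⟨Multiplicative.toAdd X.right * K, ?_⟩
    have h1 : Multiplicative.toAdd (X.right * Y.right) =
        Multiplicative.toAdd X.right + Multiplicative.toAdd Y.right := rfl
    rw [h1]
    linear_combination Multiplicative.toAdd X.right * hK
  · intro g
    constructor
    · show lam ^ (q * Multiplicative.toAdd (1 : MetaG m σ).right * V g.left) = 1
      have h0 : Multiplicative.toAdd (1 : MetaG m σ).right = 0 := rfl
      rw [h0, mul_zero, zero_mul, zpow_zero]
    · show lam ^ (q * Multiplicative.toAdd g.right * V (1 : MetaG m σ).left) = 1
      have h0 : V (1 : MetaG m σ).left = 0 := by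
        simp [hV, SemidirectProduct.one_left]
      rw [h0, mul_zero, zpow_zero]
  · intro i i₁ j j₁
    show lam ^ (q * Multiplicative.toAdd (Multiplicative.ofAdd (j : ℤ)) *
        V (Multiplicative.ofAdd ((i₁ : ZMod m)))) = _
    rw [toAdd_ofAdd]
    have hVv : V (Multiplicative.ofAdd ((i₁ : ZMod m))) = (((i₁ : ZMod m)).val : ℤ) := rfl
    rw [hVv]
    set S : ℤ := ∑ k ∈ Finset.range j, r ^ k with hS
    have hgeom : (r : ℤ) ^ j - 1 = (t : ℤ) * (s * S) := by
      rw [← geom_sum_mul r j, hs]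
      ring
    have hdiv : ((r : ℤ) ^ j - 1) / (t : ℤ) = s * S := by
      rw [hgeom, Int.mul_ediv_cancel_left _ htne]
    rw [hdiv]
    apply hpow
    -- t ∣ i₁ - val
    have hVm : (m : ℤ) ∣ (i₁ - (((i₁ : ZMod m)).val : ℤ)) := by
      rw [← ZMod.intCast_zmod_eq_zero_iff_dvd, Int.cast_sub, hcastm]
      simp
    obtain ⟨a, hA⟩ := htm.trans hVm
    -- t ∣ S - j
    have hS2 : (t : ℤ) ∣ S - (j : ℤ) := by
      rw [← ZMod.intCast_zmod_eq_zero_iff_dvd, hS]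
      push_cast [hr1]
      simp
    obtain ⟨bS, hB⟩ := hS2
    refine ⟨y * s * (-(j : ℤ) * a - i₁ * bS), ?_⟩
    have hqe : q = y * s := rfl
    rw [hqe]
    linear_combination (-(y * s * (j : ℤ))) * hA + (-(y * s * i₁)) * hB
end

section
/- Let G = ⟨a, b | aᵐ = 1, b a b⁻¹ = aʳ⟩ with m > 0 and gcd(r,m)=1, t = gcd(m, r−1), and let G⋆ = ⟨ā, b̄ | ā^{mt} = 1, b̄ ā b̄⁻¹ = āʳ⟩. Then A = ⟨āᵐ⟩ is a central subgroup of G⋆ of order t, and G⋆/A ≅ G. -/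
lemma mulaux {A B : Type*} [Group A] [Group B] (T : MulAut A) (S : MulAut B)
    (f : A →* B) (h : ∀ x, f (T x) = S (f x)) :
    ∀ (k : ℤ) (x : A), f ((T ^ k) x) = (S ^ k) (f x) := by
  have hinv : ∀ x, f (T⁻¹ x) = S⁻¹ (f x) := by
    intro x
    apply S.injective
    rw [← h, T.apply_inv_self, S.apply_inv_self]
  intro k
  induction k using Int.induction_on with
  | zero => intro x; simp
  | succ k ih =>
      intro x
      rw [zpow_add_one, zpow_add_one, MulAut.mul_apply, MulAut.mul_apply, ih, h]
  | pred k ih =>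
      intro x
      rw [zpow_sub_one, zpow_sub_one, MulAut.mul_apply, MulAut.mul_apply, ih, hinv]

lemma fixaux {A : Type*} [Group A] (T : MulAut A) {x : A} (h : T x = x) :
    ∀ (k : ℤ), (T ^ k) x = x := by
  have hinv : T⁻¹ x = x := by
    apply T.injective; rw [T.apply_inv_self, h]
  intro k
  induction k using Int.induction_on with
  | zero => simp
  | succ k ih => rw [zpow_add_one, MulAut.mul_apply, h, ih]
  | pred k ih => rw [zpow_sub_one, MulAut.mul_apply, hinv, ih]

/-- In `G⋆ = ⟨ā, b̄ | ā^{mt} = 1, b̄ ā b̄⁻¹ = āʳ⟩`, the subgroup `A = ⟨āᵐ⟩` is central of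
order `t = gcd(m, r−1)` and `G⋆/A ≅ G(m, 0, r)`. -/
theorem stmt10 (m : ℕ) (hm : 0 < m) (r : ℤ) (hcop : IsCoprime r (m : ℤ))
    (t : ℕ) (ht : (t : ℤ) = Int.gcd (m : ℤ) (r - 1))
    (σ : AddAut (ZMod m)) (hσ : ∀ z : ZMod m, σ z = (r : ZMod m) * z)
    (τ : AddAut (ZMod (m * t))) (hτ : ∀ z : ZMod (m * t), τ z = (r : ZMod (m * t)) * z) :
    (Subgroup.zpowers ((⟨Multiplicative.ofAdd (1 : ZMod (m * t)), 1⟩ : MetaG (m * t) τ) ^ m)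
        ≤ Subgroup.center (MetaG (m * t) τ)) ∧
    Nat.card (Subgroup.zpowers
        ((⟨Multiplicative.ofAdd (1 : ZMod (m * t)), 1⟩ : MetaG (m * t) τ) ^ m)) = t ∧
    (∀ [inst : (Subgroup.zpowers
        ((⟨Multiplicative.ofAdd (1 : ZMod (m * t)), 1⟩ : MetaG (m * t) τ) ^ m)).Normal],
      Nonempty ((MetaG (m * t) τ ⧸ Subgroup.zpowers
        ((⟨Multiplicative.ofAdd (1 : ZMod (m * t)), 1⟩ : MetaG (m * t) τ) ^ m))
          ≃* MetaG m σ)) := by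
  -- basic numerics
  have htdvd : (t : ℤ) ∣ r - 1 := ht ▸ Int.gcd_dvd_right _ _
  have ht0 : 0 < t := by
    rcases Nat.eq_zero_or_pos t with h0 | h0
    · exfalso
      subst h0
      have h1 : Int.gcd (m : ℤ) (r - 1) = 0 := by exact_mod_cast ht.symm
      rw [Int.gcd_eq_zero_iff] at h1
      have : (m : ℤ) = 0 := h1.1
      omega
    · exact h0
  haveI : NeZero (m * t) := ⟨by positivity⟩
  haveI : NeZero m := ⟨hm.ne'⟩
  -- the key fixed point: τ fixes (m : ZMod (m*t))
  have key : ((r : ZMod (m * t))) * ((m : ℕ) : ZMod (m * t)) = ((m : ℕ) : ZMod (m * t)) := by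
    obtain ⟨k, hk⟩ := htdvd
    have h1 : ((r * m - m : ℤ) : ZMod (m * t)) = 0 := by
      have h2 : (r * m - m : ℤ) = ((m * t : ℕ) : ℤ) * k := by
        push_cast
        linear_combination (m : ℤ) * hk
      rw [h2, Int.cast_mul, Int.cast_natCast, ZMod.natCast_self, zero_mul]
    push_cast at h1
    linear_combination h1
  have hfixT : (AddEquiv.toMultiplicative τ)
      (Multiplicative.ofAdd ((m : ℕ) : ZMod (m * t)))
      = Multiplicative.ofAdd ((m : ℕ) : ZMod (m * t)) := by
    show Multiplicative.ofAdd (τ ((m : ℕ) : ZMod (m * t))) = _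
    rw [hτ, key]
  -- the generator of A
  have hA : ((⟨Multiplicative.ofAdd (1 : ZMod (m * t)), 1⟩ : MetaG (m * t) τ) ^ m)
      = SemidirectProduct.inl (Multiplicative.ofAdd ((m : ℕ) : ZMod (m * t))) := by
    have h1 : (⟨Multiplicative.ofAdd (1 : ZMod (m * t)), 1⟩ : MetaG (m * t) τ)
        = SemidirectProduct.inl (Multiplicative.ofAdd (1 : ZMod (m * t))) := rfl
    rw [h1, ← map_pow]
    congr 1
    rw [← ofAdd_nsmul]
    congr 1
    simp [nsmul_eq_mul]
  -- centrality
  have hcent : SemidirectProduct.inl (Multiplicative.ofAdd ((m : ℕ) : ZMod (m * t)))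
      ∈ Subgroup.center (MetaG (m * t) τ) := by
    rw [Subgroup.mem_center_iff]
    intro g
    have hfz := fixaux (AddEquiv.toMultiplicative τ) hfixT
    ext
    · simp only [SemidirectProduct.mul_left, SemidirectProduct.left_inl,
        SemidirectProduct.right_inl, zpowersHom_apply, hfz, toAdd_one, zpow_zero,
        MulAut.one_apply]
      exact congrArg Multiplicative.toAdd (mul_comm _ _)
    · simp only [SemidirectProduct.mul_right, SemidirectProduct.right_inl, mul_one, one_mul]
  -- the homomorphism down to MetaG m σ
  have hdd : m ∣ m * t := ⟨t, rfl⟩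
  set f₁ : Multiplicative (ZMod (m * t)) →* Multiplicative (ZMod m) :=
    AddMonoidHom.toMultiplicative (ZMod.castHom hdd (ZMod m)).toAddMonoidHom with hf₁
  have hf₁apply : ∀ z : ZMod (m * t),
      f₁ (Multiplicative.ofAdd z) = Multiplicative.ofAdd (ZMod.castHom hdd (ZMod m) z) :=
    fun z => rfl
  have hcomm : ∀ x, f₁ ((AddEquiv.toMultiplicative τ) x)
      = (AddEquiv.toMultiplicative σ) (f₁ x) := by
    intro x
    show Multiplicative.ofAdd (ZMod.castHom hdd (ZMod m) (τ (Multiplicative.toAdd x)))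
      = Multiplicative.ofAdd (σ (ZMod.castHom hdd (ZMod m) (Multiplicative.toAdd x)))
    rw [hτ, hσ, map_mul, map_intCast]
  have hcond : ∀ g : Multiplicative ℤ,
      f₁.comp ((zpowersHom _ (AddEquiv.toMultiplicative τ) g)).toMonoidHom
        = ((zpowersHom _ (AddEquiv.toMultiplicative σ) g)).toMonoidHom.comp f₁ := by
    intro g
    ext x
    simp only [MonoidHom.comp_apply, zpowersHom_apply, MulEquiv.coe_toMonoidHom]
    exact mulaux _ _ f₁ hcomm (Multiplicative.toAdd g) x
  set φmap : MetaG (m * t) τ →* MetaG m σ :=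
    SemidirectProduct.map f₁ (MonoidHom.id _) hcond with hφmap
  have hsurj : Function.Surjective φmap := by
    rintro ⟨x, g⟩
    refine ⟨⟨Multiplicative.ofAdd (((Multiplicative.toAdd x).val : ℕ) : ZMod (m * t)), g⟩, ?_⟩
    ext
    · show f₁ (Multiplicative.ofAdd (((Multiplicative.toAdd x).val : ℕ) : ZMod (m * t))) = x
      rw [hf₁apply, map_natCast, ZMod.natCast_val, ZMod.cast_id]
      rfl
    · rfl
  have hgen0 : φmap (SemidirectProduct.inl
      (Multiplicative.ofAdd ((m : ℕ) : ZMod (m * t)))) = 1 := by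
    rw [SemidirectProduct.map_inl, hf₁apply, map_natCast]
    simp
  have hker : φmap.ker = Subgroup.zpowers
      ((⟨Multiplicative.ofAdd (1 : ZMod (m * t)), 1⟩ : MetaG (m * t) τ) ^ m) := by
    rw [hA]
    ext g
    rw [MonoidHom.mem_ker, Subgroup.mem_zpowers_iff]
    constructor
    · intro h
      have h1 : f₁ g.left = 1 := congrArg SemidirectProduct.left h
      have h2 : g.right = 1 := congrArg SemidirectProduct.right h
      set z : ZMod (m * t) := Multiplicative.toAdd g.left with hz
      have h3 : ((z.val : ℕ) : ZMod m) = 0 := by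
        have : ZMod.castHom hdd (ZMod m) z = 0 := h1
        rwa [ZMod.castHom_apply, ← ZMod.natCast_val] at this
      obtain ⟨k, hk⟩ := (ZMod.natCast_eq_zero_iff _ _).mp h3
      refine ⟨(k : ℤ), ?_⟩
      rw [← map_zpow]
      have h4 : g = SemidirectProduct.inl g.left := by
        ext
        · rfl
        · exact h2
      rw [h4]
      congr 1
      show Multiplicative.ofAdd ((m : ℕ) : ZMod (m * t)) ^ (k : ℤ) = g.left
      rw [← ofAdd_zsmul]
      have h5 : g.left = Multiplicative.ofAdd z := rfl
      rw [h5]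
      congr 1
      have h6 : z = ((z.val : ℕ) : ZMod (m * t)) := by
        rw [ZMod.natCast_val, ZMod.cast_id]
      rw [h6, hk, zsmul_eq_mul]
      push_cast
      ring
    · rintro ⟨k, rfl⟩
      rw [map_zpow, hgen0, one_zpow]
  refine ⟨?_, ?_, ?_⟩
  · rw [hA]
    exact Subgroup.zpowers_le.mpr hcent
  · rw [hA, Nat.card_zpowers]
    have h1 : orderOf (SemidirectProduct.inl (φ := (zpowersHom
        (MulAut (Multiplicative (ZMod (m * t)))) (AddEquiv.toMultiplicative τ)))
        (Multiplicative.ofAdd ((m : ℕ) : ZMod (m * t))))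
        = orderOf (Multiplicative.ofAdd ((m : ℕ) : ZMod (m * t))) :=
      orderOf_injective _ SemidirectProduct.inl_injective _
    rw [h1]
    rw [orderOf_ofAdd_eq_addOrderOf]
    rw [ZMod.addOrderOf_coe _ (by positivity)]
    rw [Nat.gcd_comm, Nat.gcd_eq_left ⟨t, rfl⟩, Nat.mul_div_cancel_left _ hm]
  · intro inst
    exact ⟨(QuotientGroup.quotientMulEquivOfEq hker.symm).trans
      (QuotientGroup.quotientKerEquivOfSurjective φmap hsurj)⟩
end

section
/- Let G be the infinite metacyclic group ⟨a, b | aᵐ = 1, b a b⁻¹ = aʳ⟩ with m > 0 and gcd(r,m) = 1. If G is nilpotent, then there exists k > 0 such that m divides (1−r)ᵏ, and consequently N = ⟨a, b^{km}⟩ is an abelian normal subgroup of G with G/N finite. -/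
section aux
open scoped commutatorElement
variable {N G : Type*} [Group N] [Group G] {φ : G →* MulAut N}

open SemidirectProduct in
theorem comm_inl_inr (n : N) (g : G) :
    ⁅(inl n : N ⋊[φ] G), (inr g : N ⋊[φ] G)⁆ = inl (n * φ g n⁻¹) := by
  simp only [commutatorElement_def, map_mul, inl_aut, ← map_inv, mul_assoc]

variable (m : ℕ) (σ : AddAut (ZMod m)) (r : ℤ) (hσ : ∀ z : ZMod m, σ z = (r : ZMod m) * z)

include hσ in
theorem comm_a_b (s : ℤ) :
    ⁅(⟨Multiplicative.ofAdd ((s : ZMod m)), 1⟩ : MetaG m σ),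
      (⟨1, Multiplicative.ofAdd (1 : ℤ)⟩ : MetaG m σ)⁆
      = ⟨Multiplicative.ofAdd ((((1 - r) * s : ℤ) : ZMod m)), 1⟩ := by
  have h1 : (⟨Multiplicative.ofAdd ((s : ZMod m)), 1⟩ : MetaG m σ)
      = SemidirectProduct.inl (Multiplicative.ofAdd ((s : ZMod m))) := rfl
  have h2 : (⟨1, Multiplicative.ofAdd (1 : ℤ)⟩ : MetaG m σ)
      = SemidirectProduct.inr (Multiplicative.ofAdd (1:ℤ)) := rfl
  have h3 : (⟨Multiplicative.ofAdd ((((1 - r) * s : ℤ) : ZMod m)), 1⟩ : MetaG m σ)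
      = SemidirectProduct.inl (Multiplicative.ofAdd ((((1 - r) * s : ℤ) : ZMod m))) := rfl
  rw [h1, h2, h3, comm_inl_inr]
  congr 1
  rw [show (zpowersHom (MulAut (Multiplicative (ZMod m))) (AddEquiv.toMultiplicative σ))
    (Multiplicative.ofAdd (1:ℤ)) = AddEquiv.toMultiplicative σ by simp]
  show Multiplicative.ofAdd ((s : ZMod m)) * Multiplicative.ofAdd (σ (-(s : ZMod m))) = _
  rw [hσ, ← ofAdd_add]
  congr 1
  push_cast
  ring

include hσ in
theorem mem_lcs (n : ℕ) :
    (⟨Multiplicative.ofAdd ((((1 - r) ^ n : ℤ) : ZMod m)), 1⟩ : MetaG m σ)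
      ∈ (⊤ : Subgroup (MetaG m σ)).lowerCentralSeries n := by
  induction n with
  | zero => simp [lowerCentralSeries]
  | succ n ih =>
      rw [Subgroup.lowerCentralSeries_succ]
      have := Subgroup.commutator_mem_commutator ih
        (Subgroup.mem_top (⟨1, Multiplicative.ofAdd (1 : ℤ)⟩ : MetaG m σ))
      rwa [comm_a_b m σ r hσ, show (1-r) * (1-r)^n = (1-r)^(n+1) by ring] at this

include hσ in
theorem dvd_of_nil (hnil : Group.IsNilpotent (MetaG m σ)) :
    ∃ n : ℕ, (m : ℤ) ∣ (1 - r) ^ n := by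
  obtain ⟨n, hn⟩ := nilpotent_iff_lowerCentralSeries.mp hnil
  refine ⟨n, ?_⟩
  have h := mem_lcs m σ r hσ n
  rw [hn, Subgroup.mem_bot] at h
  have : (((1 - r) ^ n : ℤ) : ZMod m) = 0 := by
    have := congrArg SemidirectProduct.left h
    simpa using this
  exact (ZMod.intCast_zmod_eq_zero_iff_dvd _ m).mp this
end aux


section aux2
variable (m M : ℕ) (σ : AddAut (ZMod m)) (r : ℤ) (hσ : ∀ z : ZMod m, σ z = (r : ZMod m) * z)

include hσ in
theorem sigma_pow (K : ℕ) : ∀ x : ZMod m, (K • σ) x = ((r : ZMod m)) ^ K * x := by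
  induction K with
  | zero => simp
  | succ K ih =>
      intro x
      rw [succ_nsmul, AddAut.add_apply, hσ, ih, pow_succ]
      ring

theorem tau_pow (K : ℕ) : ∀ g : Multiplicative (ZMod m),
    ((AddEquiv.toMultiplicative σ) ^ K) g = Multiplicative.ofAdd ((K • σ) g.toAdd) := by
  induction K with
  | zero => intro g; rfl
  | succ K ih =>
      intro g
      rw [pow_succ, MulAut.mul_apply, ih, show ((K+1) • σ) g.toAdd = (K • σ) (σ g.toAdd) by
        rw [succ_nsmul, AddAut.add_apply]]
      rfl

include hσ in
theorem tau_pow_eq_one (hrM : ((r : ZMod m)) ^ M = 1) :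
    (AddEquiv.toMultiplicative σ) ^ M = 1 := by
  ext g
  rw [tau_pow, sigma_pow m σ r hσ, hrM, one_mul]
  rfl

include hσ in
theorem phi_eq_one (hrM : ((r : ZMod m)) ^ M = 1) (q : ℤ) :
    (zpowersHom (MulAut (Multiplicative (ZMod m))) (AddEquiv.toMultiplicative σ))
      ((Multiplicative.ofAdd ((M : ℤ))) ^ q) = 1 := by
  rw [map_zpow, zpowersHom_apply, toAdd_ofAdd, zpow_natCast,
    tau_pow_eq_one m M σ r hσ hrM, one_zpow]
end aux2

theorem index_zpow (M : ℕ) (hM : 0 < M) :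
    (Subgroup.zpowers (Multiplicative.ofAdd ((M : ℤ)))).index ≠ 0 := by
  have h : Subgroup.zpowers (Multiplicative.ofAdd ((M : ℤ)))
      = AddSubgroup.toSubgroup (AddSubgroup.zmultiples ((M : ℤ))) := by
    ext g
    constructor
    · rintro ⟨k, rfl⟩
      exact ⟨k, by simp⟩
    · rintro ⟨k, hk⟩
      exact ⟨k, by simpa [← ofAdd_zsmul] using congrArg Multiplicative.ofAdd hk⟩
  rw [h, AddSubgroup.index_toSubgroup, Int.index_zmultiples]
  simpa using hM.ne'

set_option maxHeartbeats 1000000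

/-- If the infinite metacyclic group `G(m,0,r)` is nilpotent, then `m ∣ (1−r)ᵏ` for some
`k > 0`, and `N = ⟨a, b^{km}⟩` is an abelian normal subgroup of finite index. -/
theorem stmt11 (m : ℕ) (hm : 0 < m) (r : ℤ) (hcop : IsCoprime r (m : ℤ))
    (σ : AddAut (ZMod m)) (hσ : ∀ z : ZMod m, σ z = (r : ZMod m) * z)
    (hnil : Group.IsNilpotent (MetaG m σ)) :
    ∃ k : ℕ, 0 < k ∧ (m : ℤ) ∣ (1 - r) ^ k ∧
      (Subgroup.closure {(⟨Multiplicative.ofAdd (1 : ZMod m), 1⟩ : MetaG m σ),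
          (⟨1, Multiplicative.ofAdd (1 : ℤ)⟩ : MetaG m σ) ^ (k * m)}).Normal ∧
      (∀ x ∈ Subgroup.closure {(⟨Multiplicative.ofAdd (1 : ZMod m), 1⟩ : MetaG m σ),
          (⟨1, Multiplicative.ofAdd (1 : ℤ)⟩ : MetaG m σ) ^ (k * m)},
        ∀ y ∈ Subgroup.closure {(⟨Multiplicative.ofAdd (1 : ZMod m), 1⟩ : MetaG m σ),
          (⟨1, Multiplicative.ofAdd (1 : ℤ)⟩ : MetaG m σ) ^ (k * m)}, x * y = y * x) ∧
      (Subgroup.closure {(⟨Multiplicative.ofAdd (1 : ZMod m), 1⟩ : MetaG m σ),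
          (⟨1, Multiplicative.ofAdd (1 : ℤ)⟩ : MetaG m σ) ^ (k * m)}).FiniteIndex := by
  classical
  haveI : NeZero m := ⟨hm.ne'⟩
  have key : ∃ k : ℕ, 0 < k ∧ (m : ℤ) ∣ (1 - r) ^ k ∧ ((r : ZMod m)) ^ (k * m) = 1 := by
    obtain ⟨n, hn⟩ : ∃ n : ℕ, (m : ℤ) ∣ (1 - r) ^ n := dvd_of_nil m σ r hσ hnil
    have hu : IsUnit ((r : ZMod m)) := by
      obtain ⟨u, v, huv⟩ := hcop
      refine IsUnit.of_mul_eq_one ((u : ZMod m)) ?_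
      have := congrArg (fun z : ℤ => ((z : ZMod m))) huv
      push_cast at this
      rw [ZMod.natCast_self] at this
      simpa [mul_comm] using this
    set w : (ZMod m)ˣ := hu.unit with hw
    set d : ℕ := orderOf w with hdef
    have hd : 0 < d := orderOf_pos w
    refine ⟨(n + 1) * d, by positivity, ?_, ?_⟩
    · exact dvd_trans hn (pow_dvd_pow _ (le_trans (Nat.le_succ n) (Nat.le_mul_of_pos_right _ hd)))
    · have h1 : w ^ ((n + 1) * d * m) = 1 := by
        apply orderOf_dvd_iff_pow_eq_one.mp
        exact ⟨(n + 1) * m, by ring⟩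
      have := congrArg (Units.val) h1
      simpa [hw] using this
  obtain ⟨k, hk, hdvd, hrM⟩ := key
  refine ⟨k, hk, hdvd, ?_⟩
  set M : ℕ := k * m with hMdef
  set b : MetaG m σ := ⟨1, Multiplicative.ofAdd (1 : ℤ)⟩ with hb
  set a : MetaG m σ := ⟨Multiplicative.ofAdd (1 : ZMod m), 1⟩ with ha
  have hbM : b ^ M = SemidirectProduct.inr (Multiplicative.ofAdd ((M : ℤ))) := by
    rw [show b = SemidirectProduct.inr (Multiplicative.ofAdd (1 : ℤ)) from rfl, ← map_pow]
    congr 1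
    rw [← ofAdd_nsmul]
    congr 1
    simp
  set P : Subgroup (MetaG m σ) :=
    Subgroup.comap (SemidirectProduct.rightHom)
      (Subgroup.zpowers (Multiplicative.ofAdd ((M : ℤ)))) with hP
  have haP : ∀ j : ℕ, a ^ j = SemidirectProduct.inl (Multiplicative.ofAdd ((j : ZMod m))) := by
    intro j
    rw [show a = SemidirectProduct.inl (Multiplicative.ofAdd (1 : ZMod m)) from rfl, ← map_pow]
    congr 1
    rw [← ofAdd_nsmul]
    congr 1
    simp
  have hNP : Subgroup.closure {a, b ^ M} = P := by
    apply le_antisymm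
    · rw [Subgroup.closure_le]
      rintro x (rfl | rfl)
      · exact ⟨0, by simp [SemidirectProduct.rightHom, ha]⟩
      · rw [hbM]
        exact Subgroup.mem_zpowers _
    · intro g hg
      obtain ⟨q, hq⟩ := hg
      have hg1 : SemidirectProduct.inl g.left ∈ Subgroup.closure {a, b ^ M} := by
        have : a ^ (g.left.toAdd.val) = SemidirectProduct.inl g.left := by
          rw [haP]
          congr 1
          rw [ZMod.natCast_val, ZMod.cast_id]
          rfl
        rw [← this]
        exact pow_mem (Subgroup.subset_closure (Set.mem_insert _ _)) _
      have hg2 : SemidirectProduct.inr g.right ∈ Subgroup.closure {a, b ^ M} := by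
        have : (b ^ M) ^ q = SemidirectProduct.inr g.right := by
          rw [hbM, ← map_zpow]
          exact congrArg SemidirectProduct.inr hq
        rw [← this]
        exact zpow_mem (Subgroup.subset_closure (Set.mem_insert_of_mem _ (Set.mem_singleton _))) _
      rw [← SemidirectProduct.inl_left_mul_inr_right g]
      exact mul_mem hg1 hg2
  rw [hNP]
  have hright : ∀ g : MetaG m σ, g ∈ P → (zpowersHom (MulAut (Multiplicative (ZMod m)))
      (AddEquiv.toMultiplicative σ)) g.right = 1 := by
    intro g hg
    obtain ⟨q, hq⟩ := hg
    rw [show SemidirectProduct.rightHom g = g.right from rfl] at hq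
    rw [← hq]
    exact phi_eq_one m M σ r hσ hrM q
  refine ⟨Subgroup.Normal.comap inferInstance _, ?_, ?_⟩
  · intro x hx y hy
    ext
    · rw [SemidirectProduct.mul_left, SemidirectProduct.mul_left,
        hright x hx, hright y hy]
      simp [mul_comm]
    · rw [SemidirectProduct.mul_right, SemidirectProduct.mul_right, mul_comm]
  · constructor
    rw [hP, Subgroup.index_comap_of_surjective _ SemidirectProduct.rightHom_surjective]
    exact index_zpow M (by positivity)
end

section
/- Let G be a group, N a subgroup of finite index in G, α a 2-cocycle on G with values in ℂ×, and V an irreducible module over the twisted group algebra ℂᵅG. If every irreducible ℂᵅN-module is finite dimensional (where α is restricted to N × N), and there exists a maximal proper ℂᵅ|_N-submodule W of V, then V is finite dimensional. -/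
universe u v

/-- An `α`-representation: `ρ(1) = id` and `ρ(x)ρ(y) = α(x,y) ρ(xy)`.  This is the same
datum as a module over the twisted group algebra `ℂᵅG`. -/
def IsProjRep {G V : Type*} [Group G] [AddCommGroup V] [Module ℂ V]
    (α : G → G → ℂˣ) (ρ : G → Module.End ℂ V) : Prop :=
  ρ 1 = 1 ∧ ∀ x y : G, ρ x * ρ y = ((α x y : ℂ) • ρ (x * y))

/-- Irreducibility of an `α`-representation (equivalently, of the corresponding
`ℂᵅG`-module): the space is nonzero and has no proper nonzero invariant subspace. -/
def IsIrred {G V : Type*} [Group G] [AddCommGroup V] [Module ℂ V]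
    (ρ : G → Module.End ℂ V) : Prop :=
  (∃ v : V, v ≠ 0) ∧
  ∀ p : Submodule ℂ V, (∀ g : G, ∀ v ∈ p, ρ g v ∈ p) → p = ⊥ ∨ p = ⊤

section Aux

variable {G : Type u} [Group G] {V : Type v} [AddCommGroup V] [Module ℂ V]
  {α : G → G → ℂˣ} {ρ : G → Module.End ℂ V}

theorem aux_inv (hα : IsCocycle α) (g : G) : α g g⁻¹ = α g⁻¹ g := by
  have h := hα.1 g g⁻¹ g
  simpa [(hα.2 g).1, (hα.2 g).2] using h

/-- `ρ g` as a linear equivalence. -/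
noncomputable def rhoEquiv (hα : IsCocycle α) (hρ : IsProjRep α ρ) (g : G) : V ≃ₗ[ℂ] V :=
  LinearEquiv.ofLinear (ρ g) (((α g g⁻¹ : ℂ)⁻¹) • ρ g⁻¹)
    (by
      have h1 : ρ g * (((α g g⁻¹ : ℂ)⁻¹) • ρ g⁻¹) = 1 := by
        rw [mul_smul_comm, hρ.2 g g⁻¹, mul_inv_cancel, hρ.1, smul_smul,
          inv_mul_cancel₀ (α g g⁻¹).ne_zero, one_smul]
      exact h1)
    (by
      have h2 : (((α g g⁻¹ : ℂ)⁻¹) • ρ g⁻¹) * ρ g = 1 := by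
        rw [smul_mul_assoc, hρ.2 g⁻¹ g, inv_mul_cancel, hρ.1, smul_smul,
          aux_inv hα g, inv_mul_cancel₀ (α g⁻¹ g).ne_zero, one_smul]
      exact h2)

theorem rhoEquiv_coe (hα : IsCocycle α) (hρ : IsProjRep α ρ) (g : G) :
    (rhoEquiv hα hρ g : V →ₗ[ℂ] V) = ρ g := rfl

end Aux

/-- If `N ≤ G` has finite index, every irreducible `ℂᵅN`-module is finite dimensional, and
the irreducible `ℂᵅG`-module `V` has a maximal proper `ℂᵅN`-submodule, then `V` is finite
dimensional. -/
theorem stmt14 {G : Type u} [Group G] (N : Subgroup G) (hfi : N.FiniteIndex)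
    (α : G → G → ℂˣ) (hα : IsCocycle α)
    {V : Type v} [AddCommGroup V] [Module ℂ V]
    (ρ : G → Module.End ℂ V) (hρ : IsProjRep α ρ) (hirr : IsIrred ρ)
    (hNfin : ∀ (W : Type v) [AddCommGroup W] [Module ℂ W]
      (τ : N → Module.End ℂ W),
      IsProjRep (fun h₁ h₂ : N => α (h₁ : G) (h₂ : G)) τ → IsIrred τ →
        FiniteDimensional ℂ W)
    (hmax : ∃ p : Submodule ℂ V, p ≠ ⊤ ∧ (∀ h : N, ∀ v ∈ p, ρ (h : G) v ∈ p) ∧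
      ∀ q : Submodule ℂ V, q ≠ ⊤ → (∀ h : N, ∀ v ∈ q, ρ (h : G) v ∈ q) →
        p ≤ q → q = p) :
    FiniteDimensional ℂ V := by
  obtain ⟨W, hWne, hWinv, hWmax⟩ := hmax
  -- `N` preserves `W` exactly
  have hcomapN : ∀ h : N, Submodule.comap (ρ (h : G)) W = W := by
    intro h
    refine le_antisymm (fun v hv => ?_) (fun v hv => hWinv h v hv)
    have h2 : ρ ((h⁻¹ : N) : G) (ρ (h : G) v) ∈ W := hWinv h⁻¹ _ hv
    have h3 : ((α ((h : G))⁻¹ (h : G) : ℂ) • v) ∈ W := by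
      have hc : ρ ((h : G))⁻¹ (ρ (h : G) v) = (α ((h : G))⁻¹ (h : G) : ℂ) • v := by
        have := congrArg (fun f : Module.End ℂ V => f v) (hρ.2 ((h : G))⁻¹ (h : G))
        simpa [hρ.1] using this
      rw [← hc]; simpa using h2
    exact (W.smul_mem_iff (α ((h : G))⁻¹ (h : G)).ne_zero).1 h3
  -- comap of products and scalars
  have hcomap_mul : ∀ (f g : Module.End ℂ V) (p : Submodule ℂ V),
      Submodule.comap (f * g) p = Submodule.comap g (Submodule.comap f p) := by
    intro f g p; rfl
  have hcomap_smul : ∀ (c : ℂ), c ≠ 0 → ∀ (f : Module.End ℂ V) (p : Submodule ℂ V),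
      Submodule.comap (c • f) p = Submodule.comap f p := by
    intro c hc f p
    ext v
    simp [Submodule.mem_comap, Submodule.smul_mem_iff _ hc]
  -- the comap of `W` only depends on the right coset
  have hcoset : ∀ n : G, n ∈ N → ∀ g : G,
      Submodule.comap (ρ (n * g)) W = Submodule.comap (ρ g) W := by
    intro n hn g
    have h1 : ρ (n * g) = ((α n g : ℂ)⁻¹) • (ρ n * ρ g) := by
      rw [hρ.2 n g, smul_smul, inv_mul_cancel₀ (α n g).ne_zero, one_smul]
    rw [h1, hcomap_smul _ (inv_ne_zero (α n g).ne_zero), hcomap_mul,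
      hcomapN ⟨n, hn⟩]
  -- the quotient representation of `N` on `V ⧸ W`
  have hle : ∀ h : N, W ≤ W.comap (ρ (h : G)) := fun h v hv => hWinv h v hv
  set τ : N → Module.End ℂ (V ⧸ W) := fun h => W.mapQ W (ρ (h : G)) (hle h) with hτdef
  have hτ : IsProjRep (fun h₁ h₂ : N => α (h₁ : G) (h₂ : G)) τ := by
    constructor
    · refine LinearMap.ext fun x => ?_
      obtain ⟨v, rfl⟩ := Submodule.Quotient.mk_surjective W x
      simp [hτdef, Submodule.mapQ_apply, hρ.1]
    · intro x y
      refine LinearMap.ext fun t => ?_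
      obtain ⟨v, rfl⟩ := Submodule.Quotient.mk_surjective W t
      have hc : ρ (x : G) (ρ (y : G) v) = (α (x : G) (y : G) : ℂ) • ρ ((x : G) * (y : G)) v := by
        have := congrArg (fun f : Module.End ℂ V => f v) (hρ.2 (x : G) (y : G))
        simpa using this
      simp [hτdef, Submodule.mapQ_apply, Module.End.mul_apply, hc,
        Submodule.Quotient.mk_smul]
  have hτirr : IsIrred τ := by
    constructor
    · obtain ⟨v, hv⟩ : ∃ v, v ∉ W := by
        by_contra hc
        push_neg at hc
        exact hWne (eq_top_iff.2 fun v _ => hc v)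
      exact ⟨Submodule.Quotient.mk v, by
        simpa [Submodule.Quotient.mk_eq_zero] using hv⟩
    · intro p hp
      set q := p.comap W.mkQ with hq
      have hWq : W ≤ q := by
        intro w hw
        have : W.mkQ w = 0 := (Submodule.Quotient.mk_eq_zero W).2 hw
        simp [hq, Submodule.mem_comap, this]
      have hqinv : ∀ h : N, ∀ v ∈ q, ρ (h : G) v ∈ q := by
        intro h v hv
        have : W.mkQ (ρ (h : G) v) = τ h (W.mkQ v) := by
          simp [hτdef, Submodule.mapQ_apply, Submodule.mkQ_apply]
        simp only [hq, Submodule.mem_comap] at hv ⊢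
        rw [this]
        exact hp h _ hv
      have hsurj := W.mkQ_surjective
      by_cases hqt : q = ⊤
      · right
        rw [← Submodule.map_comap_eq_of_surjective hsurj p, ← hq, hqt,
          Submodule.map_top, Submodule.range_mkQ]
      · left
        have hqW : q = W := hWmax q hqt hqinv hWq
        have hb : Submodule.map W.mkQ W = ⊥ := by
          ext x
          simp only [Submodule.mem_map, Submodule.mem_bot]
          constructor
          · rintro ⟨w, hw, rfl⟩
            exact (Submodule.Quotient.mk_eq_zero W).2 hw
          · rintro rfl
            exact ⟨0, W.zero_mem, map_zero _⟩
        rw [← Submodule.map_comap_eq_of_surjective hsurj p, ← hq, hqW, hb]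
  haveI hVW : FiniteDimensional ℂ (V ⧸ W) := hNfin (V ⧸ W) τ hτ hτirr
  -- the big intersection is a `G`-submodule, hence `⊥`
  have hinv0 : ∀ g : G, ∀ v ∈ (⨅ g : G, Submodule.comap (ρ g) W),
      ρ g v ∈ (⨅ g : G, Submodule.comap (ρ g) W) := by
    intro g v hv
    rw [Submodule.mem_iInf] at hv ⊢
    intro x
    have h2 : ρ x (ρ g v) = (α x g : ℂ) • ρ (x * g) v := by
      have := congrArg (fun f : Module.End ℂ V => f v) (hρ.2 x g)
      simpa using this
    simp only [Submodule.mem_comap]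
    rw [h2]
    exact W.smul_mem _ (Submodule.mem_comap.1 (hv (x * g)))
  have hW0 : (⨅ g : G, Submodule.comap (ρ g) W) = ⊥ := by
    rcases hirr.2 _ hinv0 with h | h
    · exact h
    · exfalso
      apply hWne
      have h1 : (⨅ g : G, Submodule.comap (ρ g) W) ≤ W := by
        have := iInf_le (fun g => Submodule.comap (ρ g) W) 1
        simpa [hρ.1, Module.End.one_eq_id, Submodule.comap_id] using this
      rw [h] at h1
      exact le_antisymm le_top h1
  -- outs of cosets
  have hout : ∀ g : G,
      Submodule.comap (ρ (((QuotientGroup.mk g : G ⧸ N).out)⁻¹)) W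
        = Submodule.comap (ρ g⁻¹) W := by
    intro g
    have hn : g⁻¹ * (QuotientGroup.mk g : G ⧸ N).out ∈ N := by
      rw [← QuotientGroup.eq]
      exact ((QuotientGroup.mk g : G ⧸ N).out_eq).symm
    have h1 : ((QuotientGroup.mk g : G ⧸ N).out)⁻¹
        = (g⁻¹ * (QuotientGroup.mk g : G ⧸ N).out)⁻¹ * g⁻¹ := by group
    rw [h1]
    exact hcoset _ (inv_mem hn) g⁻¹
  -- the finite intersection is still `⊥`
  have hFinf : (⨅ c : G ⧸ N, Submodule.comap (ρ ((Quotient.out c)⁻¹)) W) = ⊥ := by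
    refine le_bot_iff.1 ?_
    rw [← hW0]
    refine le_iInf fun g => ?_
    refine iInf_le_of_le (QuotientGroup.mk g⁻¹) ?_
    rw [show ((QuotientGroup.mk g⁻¹ : G ⧸ N)).out = (QuotientGroup.mk g⁻¹ : G ⧸ N).out from rfl]
    rw [hout g⁻¹, inv_inv]
  -- each quotient is finite dimensional
  haveI hqfin : ∀ c : G ⧸ N,
      FiniteDimensional ℂ (V ⧸ Submodule.comap (ρ ((Quotient.out c)⁻¹)) W) := by
    intro c
    set g := (Quotient.out c)⁻¹ with hg
    have hcoe : Submodule.comap (ρ g) W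
        = Submodule.comap (rhoEquiv hα hρ g : V →ₗ[ℂ] V) W := by
      rw [rhoEquiv_coe]
    have hmap : Submodule.map (rhoEquiv hα hρ g : V →ₗ[ℂ] V) (Submodule.comap (ρ g) W) = W := by
      rw [hcoe]
      exact Submodule.map_comap_eq_of_surjective (rhoEquiv hα hρ g).surjective W
    exact (Submodule.Quotient.equiv (Submodule.comap (ρ g) W) W
      (rhoEquiv hα hρ g) hmap).symm.finiteDimensional
  -- conclude through the diagonal map
  haveI := hfi
  haveI : Finite (G ⧸ N) := inferInstance
  haveI := Fintype.ofFinite (G ⧸ N)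
  set Φ : V →ₗ[ℂ] ∀ c : G ⧸ N, V ⧸ Submodule.comap (ρ ((Quotient.out c)⁻¹)) W :=
    LinearMap.pi fun c => (Submodule.comap (ρ ((Quotient.out c)⁻¹)) W).mkQ with hΦ
  refine FiniteDimensional.of_injective Φ ?_
  rw [← LinearMap.ker_eq_bot, hΦ, LinearMap.ker_pi]
  simpa [Submodule.ker_mkQ] using hFinf
end

section
/- Let G be a group, α a normalized ℂ×-valued 2-cocycle on G, and N a normal subgroup of G. If the twisted group algebra ℂᵅN has an infinite-dimensional irreducible module, then the twisted group algebra ℂᵅG has an infinite-dimensional irreducible module. Equivalently: if G is α-finite (every irreducible ℂᵅG-module is finite dimensional), then N is α|_{N×N}-finite. -/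
universe u

set_option linter.unusedSectionVars false
set_option linter.unusedVariables false

namespace Stmt15Aux
variable {G : Type u} [Group G] (N : Subgroup G)

noncomputable def sec (c : G ⧸ N) : G := Quotient.out c
lemma sec_spec (c : G ⧸ N) : (QuotientGroup.mk (sec N c) : G ⧸ N) = c := Quotient.out_eq c
lemma smul_mk (g a : G) : g • (QuotientGroup.mk a : G ⧸ N) = QuotientGroup.mk (g * a) := rfl
lemma mem_nn (g : G) (c : G ⧸ N) : (sec N (g • c))⁻¹ * (g * sec N c) ∈ N := by
  have h : (QuotientGroup.mk (sec N (g • c)) : G ⧸ N) = QuotientGroup.mk (g * sec N c) := by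
    rw [sec_spec, ← smul_mk, sec_spec]
  exact QuotientGroup.eq.mp h
noncomputable def nn (g : G) (c : G ⧸ N) : N := ⟨_, mem_nn N g c⟩
lemma nn_val (g : G) (c : G ⧸ N) : (nn N g c : G) = (sec N (g • c))⁻¹ * (g * sec N c) := rfl

lemma nn_mul (x y : G) (c : G ⧸ N) : nn N x (y • c) * nn N y c = nn N (x * y) c := by
  apply Subtype.ext
  push_cast [nn_val, smul_smul]
  group

lemma nn_one (c : G ⧸ N) : nn N 1 c = 1 := by
  apply Subtype.ext
  push_cast [nn_val, one_smul]
  group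

variable {α : G → G → ℂˣ}

lemma coc_c (hα : IsCocycle α) (x y z : G) :
    (α x y : ℂ) * α (x * y) z = α x (y * z) * α y z := by
  have := congrArg (Units.val) (hα.1 x y z)
  simpa using this

lemma coc_key (hα : IsCocycle α) (x y c' A B n1 n2 n3 : G)
    (h1 : A * n1 = y * c') (h2 : B * n2 = x * A) (h3 : n2 * n1 = n3) :
    (α x A : ℂ) * α y c' * α n2 n1 * α B n3
      = α x y * α (x * y) c' * α B n2 * α A n1 := by
  have e1 := coc_c hα x y c'
  have e2 := coc_c hα x A n1
  have e3 := coc_c hα B n2 n1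
  rw [h1] at e2
  rw [h2, h3] at e3
  linear_combination (-((α y c' : ℂ) * α x A)) * e3 + ((α y c' : ℂ) * α B n2) * e2
    + (-((α B n2 : ℂ) * α A n1)) * e1

noncomputable def uc (α : G → G → ℂˣ) (g : G) (c : G ⧸ N) : ℂˣ :=
  α g (sec N c) * (α (sec N (g • c)) (nn N g c : G))⁻¹

lemma uc_key (hα : IsCocycle α) (x y : G) (c : G ⧸ N) :
    (uc N α x (y • c) : ℂ) * uc N α y c * α (nn N x (y • c) : G) (nn N y c : G)
      = α x y * uc N α (x * y) c := by
  have h1 : sec N (y • c) * (nn N y c : G) = y * sec N c := by rw [nn_val]; group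
  have h2 : sec N ((x * y) • c) * (nn N x (y • c) : G) = x * sec N (y • c) := by
    rw [nn_val, smul_smul]; group
  have h3 : (nn N x (y • c) : G) * (nn N y c : G) = (nn N (x * y) c : G) := by
    rw [← Subgroup.coe_mul, nn_mul]
  have key := coc_key hα x y (sec N c) (sec N (y • c)) (sec N ((x * y) • c))
    (nn N y c : G) (nn N x (y • c) : G) (nn N (x * y) c : G) h1 h2 h3
  simp only [uc, smul_smul, Units.val_mul, Units.val_inv_eq_inv_val]
  field_simp
  linear_combination key

lemma uc_one (hα : IsCocycle α) (c : G ⧸ N) : uc N α 1 c = 1 := by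
  simp [uc, nn_one, (hα.2 _).1, (hα.2 _).2, one_smul]

variable {W : Type u} [AddCommGroup W] [Module ℂ W] (τ : ↥N → Module.End ℂ W)

noncomputable def rho (α : G → G → ℂˣ) (g : G) : Module.End ℂ ((G ⧸ N) →₀ W) :=
  Finsupp.lsum ℂ fun c => (Finsupp.lsingle (g • c)).comp ((uc N α g c : ℂ) • τ (nn N g c))

lemma rho_single (g : G) (c : G ⧸ N) (w : W) :
    rho N τ α g (Finsupp.single c w)
      = Finsupp.single (g • c) ((uc N α g c : ℂ) • τ (nn N g c) w) := by
  simp [rho]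

lemma rho_projrep (hα : IsCocycle α)
    (hτ : IsProjRep (fun h₁ h₂ : N => α (h₁ : G) (h₂ : G)) τ) :
    IsProjRep α (rho N τ α) := by
  constructor
  · apply Finsupp.lhom_ext'
    intro c
    apply LinearMap.ext
    intro w
    simp [rho_single, nn_one, uc_one N hα, hτ.1]
  · intro x y
    apply Finsupp.lhom_ext'
    intro c
    apply LinearMap.ext
    intro w
    have hmul := DFunLike.congr_fun (hτ.2 (nn N x (y • c)) (nn N y c)) w
    simp only [Module.End.mul_apply, LinearMap.smul_apply] at hmul
    show rho N τ α x (rho N τ α y (Finsupp.single c w)) = (α x y : ℂ) • rho N τ α (x*y) (Finsupp.single c w)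
    rw [rho_single, rho_single, rho_single, map_smul, hmul, nn_mul]
    simp only [Finsupp.smul_single, smul_smul]
    rw [← mul_assoc, uc_key N hα x y c]



variable [N.Normal] {α : G → G → ℂˣ} {W : Type u} [AddCommGroup W] [Module ℂ W]
  {τ : ↥N → Module.End ℂ W}

lemma tau_unit (hτ : IsProjRep (fun h₁ h₂ : N => α (h₁ : G) (h₂ : G)) τ)
    (n : ↥N) (u : ℂˣ) (w : W) : ∃ w', (u : ℂ) • τ n w' = w := by
  refine ⟨((u : ℂ)⁻¹ * (α (n : G) ((n⁻¹ : N) : G) : ℂ)⁻¹) • τ n⁻¹ w, ?_⟩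
  have h := DFunLike.congr_fun (hτ.2 n n⁻¹) w
  simp only [Module.End.mul_apply, LinearMap.smul_apply, mul_inv_cancel, hτ.1,
    Module.End.one_apply] at h
  rw [map_smul, smul_smul, h, smul_smul]
  have h1 : (u : ℂ) ≠ 0 := Units.ne_zero u
  have h2 : (α (n : G) ((n⁻¹ : N) : G) : ℂ) ≠ 0 := Units.ne_zero _
  have : (u : ℂ) * ((u : ℂ)⁻¹ * (α (n : G) ((n⁻¹ : N) : G) : ℂ)⁻¹) * (α (n : G) ((n⁻¹ : N) : G) : ℂ) = 1 := by
    field_simp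
  rw [this, one_smul]

lemma sec_one_mem : sec N (1 : G ⧸ N) ∈ N := by
  have := sec_spec N (1 : G ⧸ N)
  exact (QuotientGroup.eq_one_iff _).mp this

lemma inv_comap (hτ : IsProjRep (fun h₁ h₂ : N => α (h₁ : G) (h₂ : G)) τ)
    (p : Submodule ℂ ((G ⧸ N) →₀ W))
    (hp : ∀ g : G, ∀ v ∈ p, rho N τ α g v ∈ p)
    (n : ↥N) (w : W) (hw : Finsupp.single (1 : G ⧸ N) w ∈ p) :
    Finsupp.single (1 : G ⧸ N) (τ n w) ∈ p := by
  set s : ↥N := ⟨sec N (1 : G ⧸ N), sec_one_mem N⟩ with hs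
  set m : ↥N := s * n * s⁻¹ with hmdef
  have hm1 : (m : G) • (1 : G ⧸ N) = 1 := by
    rw [show (1 : G ⧸ N) = QuotientGroup.mk 1 from rfl, smul_mk, mul_one]
    exact (QuotientGroup.eq_one_iff _).mpr m.2
  have hnn : nn N (m : G) 1 = n := by
    apply Subtype.ext
    rw [nn_val, hm1]
    show (sec N (1:G⧸N))⁻¹ * ((sec N (1:G⧸N) * n * (sec N (1:G⧸N))⁻¹) * sec N (1:G⧸N)) = n
    group
  have h := hp (m : G) _ hw
  rw [rho_single, hm1, hnn, ← Finsupp.smul_single] at h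
  have h2 := p.smul_mem ((uc N α (m : G) 1 : ℂ)⁻¹) h
  rwa [smul_smul, inv_mul_cancel₀ (Units.ne_zero _), one_smul] at h2

lemma sec_smul_one (c : G ⧸ N) : sec N c • (1 : G ⧸ N) = c := by
  rw [show (1 : G ⧸ N) = QuotientGroup.mk 1 from rfl, smul_mk, mul_one, sec_spec]

lemma gen_top (hτ : IsProjRep (fun h₁ h₂ : N => α (h₁ : G) (h₂ : G)) τ)
    (hτirr : IsIrred τ)
    (p : Submodule ℂ ((G ⧸ N) →₀ W))
    (hp : ∀ g : G, ∀ v ∈ p, rho N τ α g v ∈ p)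
    {w₀ : W} (hw₀ : w₀ ≠ 0) (hv : Finsupp.single (1 : G ⧸ N) w₀ ∈ p) : p = ⊤ := by
  set Q : Submodule ℂ W := p.comap (Finsupp.lsingle (1 : G ⧸ N)) with hQ
  have hQinv : ∀ n : ↥N, ∀ w ∈ Q, τ n w ∈ Q := fun n w hw => inv_comap N hτ p hp n w hw
  have hQtop : Q = ⊤ := by
    rcases hτirr.2 Q hQinv with h | h
    · exact absurd (h ▸ hv : w₀ ∈ (⊥ : Submodule ℂ W)) (by simpa using hw₀)
    · exact h
  have hsingle : ∀ (c : G ⧸ N) (w : W), Finsupp.single c w ∈ p := by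
    intro c w
    obtain ⟨w', hw'⟩ := tau_unit N hτ (nn N (sec N c) 1) (uc N α (sec N c) 1) w
    have h1 : Finsupp.single (1 : G ⧸ N) w' ∈ p := by
      have : w' ∈ Q := hQtop ▸ Submodule.mem_top
      exact this
    have h2 := hp (sec N c) _ h1
    rwa [rho_single, sec_smul_one, hw'] at h2
  rw [Submodule.eq_top_iff']
  intro f
  induction f using Finsupp.induction with
  | zero => exact p.zero_mem
  | single_add a b f _ _ ih => exact p.add_mem (hsingle a b) ih

end Stmt15Aux

open Stmt15Aux

/-- If `G` is `α`-finite (all irreducible `ℂᵅG`-modules are finite dimensional), then every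
normal subgroup `N` of `G` is `α|_{N×N}`-finite. -/
theorem stmt15 {G : Type u} [Group G] (N : Subgroup G) [N.Normal]
    (α : G → G → ℂˣ) (hα : IsCocycle α)
    (hGfin : ∀ (V : Type u) [AddCommGroup V] [Module ℂ V]
      (ρ : G → Module.End ℂ V), IsProjRep α ρ → IsIrred ρ → FiniteDimensional ℂ V) :
    ∀ (W : Type u) [AddCommGroup W] [Module ℂ W] (τ : N → Module.End ℂ W),
      IsProjRep (fun h₁ h₂ : N => α (h₁ : G) (h₂ : G)) τ → IsIrred τ →
        FiniteDimensional ℂ W := by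
  intro W _ _ τ hτ hτirr
  obtain ⟨w₀, hw₀⟩ := hτirr.1
  set V := ((G ⧸ N) →₀ W) with hV
  set ρ : G → Module.End ℂ V := rho N τ α with hρdef
  have hρ : IsProjRep α ρ := rho_projrep N τ hα hτ
  set v₀ : V := Finsupp.single (1 : G ⧸ N) w₀ with hv₀def
  have hv₀ : v₀ ≠ 0 := by
    rw [hv₀def, Ne, Finsupp.single_eq_zero]
    exact hw₀
  set S : Set (Submodule ℂ V) :=
    {p | (∀ g : G, ∀ v ∈ p, ρ g v ∈ p) ∧ v₀ ∉ p} with hSdef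
  have hbot : (⊥ : Submodule ℂ V) ∈ S := by
    constructor
    · intro g v hv
      rw [Submodule.mem_bot] at hv ⊢
      rw [hv, map_zero]
    · simpa using hv₀
  -- Zorn's lemma
  obtain ⟨M, -, hM⟩ := zorn_le_nonempty₀ S (by
    intro ch hch hchain y hy
    refine ⟨sSup ch, ⟨?_, ?_⟩, fun z hz => le_sSup hz⟩
    · intro g v hv
      rw [Submodule.mem_sSup_of_directed ⟨y, hy⟩ hchain.directedOn] at hv ⊢
      obtain ⟨p, hp, hvp⟩ := hv
      exact ⟨p, hp, (hch hp).1 g v hvp⟩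
    · rw [Submodule.mem_sSup_of_directed ⟨y, hy⟩ hchain.directedOn]
      rintro ⟨p, hp, hvp⟩
      exact (hch hp).2 hvp) ⊥ hbot
  have hMinv : ∀ g : G, ∀ v ∈ M, ρ g v ∈ M := hM.prop.1
  have hMv : v₀ ∉ M := hM.prop.2
  have hcom : ∀ g : G, M ≤ M.comap (ρ g) := fun g v hv => hMinv g v hv
  set ρ' : G → Module.End ℂ (V ⧸ M) := fun g => M.mapQ M (ρ g) (hcom g) with hρ'def
  have hmk : ∀ (g : G) (v : V), ρ' g (Submodule.Quotient.mk v) = Submodule.Quotient.mk (ρ g v) :=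
    fun g v => Submodule.mapQ_apply M M (ρ g) v
  have hρ' : IsProjRep α ρ' := by
    constructor
    · apply LinearMap.ext
      intro x
      obtain ⟨v, rfl⟩ := Submodule.Quotient.mk_surjective M x
      rw [hmk, DFunLike.congr_fun hρ.1 v]
      rfl
    · intro x y
      apply LinearMap.ext
      intro z
      obtain ⟨v, rfl⟩ := Submodule.Quotient.mk_surjective M z
      have h := DFunLike.congr_fun (hρ.2 x y) v
      simp only [Module.End.mul_apply, LinearMap.smul_apply] at h ⊢
      rw [hmk, hmk, h, Submodule.Quotient.mk_smul, hmk]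
  have hρ'irr : IsIrred ρ' := by
    constructor
    · exact ⟨Submodule.Quotient.mk v₀, by
        rw [Ne, Submodule.Quotient.mk_eq_zero]; exact hMv⟩
    · intro p hp
      set q : Submodule ℂ V := p.comap M.mkQ with hqdef
      have hqinv : ∀ g : G, ∀ v ∈ q, ρ g v ∈ q := by
        intro g v hv
        show M.mkQ (ρ g v) ∈ p
        have : M.mkQ (ρ g v) = ρ' g (M.mkQ v) := (hmk g v).symm
        rw [this]
        exact hp g _ hv
      have hMq : M ≤ q := by
        intro v hv
        show M.mkQ v ∈ p
        have : M.mkQ v = 0 := (Submodule.Quotient.mk_eq_zero M).mpr hv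
        rw [this]; exact p.zero_mem
      by_cases hvq : v₀ ∈ q
      · right
        have hqtop : q = ⊤ := gen_top N hτ hτirr q hqinv hw₀ hvq
        rw [Submodule.eq_top_iff']
        intro x
        obtain ⟨v, rfl⟩ := Submodule.Quotient.mk_surjective M x
        have : v ∈ q := hqtop ▸ Submodule.mem_top
        exact this
      · left
        have hqM : q = M := le_antisymm (hM.le_of_ge ⟨hqinv, hvq⟩ hMq) hMq
        rw [Submodule.eq_bot_iff]
        intro x hx
        obtain ⟨v, rfl⟩ := Submodule.Quotient.mk_surjective M x
        have : v ∈ M := hqM ▸ hx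
        exact (Submodule.Quotient.mk_eq_zero M).mpr this
  have hfin : FiniteDimensional ℂ (V ⧸ M) := hGfin (V ⧸ M) ρ' hρ' hρ'irr
  -- embed W into V ⧸ M
  set f : W →ₗ[ℂ] V ⧸ M := M.mkQ.comp (Finsupp.lsingle (1 : G ⧸ N)) with hfdef
  have hfinj : Function.Injective f := by
    rw [← LinearMap.ker_eq_bot]
    set QM : Submodule ℂ W := M.comap (Finsupp.lsingle (1 : G ⧸ N)) with hQMdef
    have hQMinv : ∀ n : ↥N, ∀ w ∈ QM, τ n w ∈ QM :=
      fun n w hw => inv_comap N hτ M hMinv n w hw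
    have hQMbot : QM = ⊥ := by
      rcases hτirr.2 QM hQMinv with h | h
      · exact h
      · exact absurd (h ▸ Submodule.mem_top : w₀ ∈ QM) hMv
    rw [Submodule.eq_bot_iff] at hQMbot ⊢
    intro w hw
    apply hQMbot
    show Finsupp.single (1 : G ⧸ N) w ∈ M
    have : M.mkQ (Finsupp.single (1 : G ⧸ N) w) = 0 := hw
    rwa [← Submodule.Quotient.mk_eq_zero M]
  exact FiniteDimensional.of_injective f hfinj
end
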